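/- Let P be a finite bounded poset and let Σ be a generalized recursive atom ordering of P. Then the chain-atom ordering obtained by applying the atom reordering process to Σ (with respect to any linear extension of P) is itself a generalized recursive atom ordering of P. -/

import Mathlib

/-- `l` is a saturated chain from `x` to `y` in the poset `α`:
a list `x = x₀ ⋖ x₁ ⋖ ⋯ ⋖ x_k = y` of elements, each covered by the next. -/
def SatChain {α : Type*} [PartialOrder α] (x y : α) (l : List α) : Prop :=
  l.Chain' (· ⋖ ·) ∧ l.head? = some x ∧ l.getLast? = some y

/-- A chain-atom ordering of a bounded poset `α`: for each `u : α` and each root `r`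
(a saturated chain from `⊥` to `u`, recorded as a list ending in `u`), a strict linear
order on the atoms of the rooted interval `[u, ⊤]_r`, i.e. on the elements covering `u`.
The relation is recorded for all pairs `(u, r)`; only genuine roots are relevant. -/
structure ChainAtomOrdering (α : Type*) [PartialOrder α] where
  lt : α → List α → α → α → Prop
  irrefl : ∀ u r a, ¬ lt u r a a
  trans : ∀ u r a b c, lt u r a b → lt u r b c → lt u r a c
  total : ∀ u r a b, u ⋖ a → u ⋖ b → a ≠ b → lt u r a b ∨ lt u r b a

/-- `a` is the first atom of the rooted interval `[u,v]_r` in the chain-atom ordering `S`. -/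
def ChainAtomOrdering.IsFirstAtom {α : Type*} [PartialOrder α] (S : ChainAtomOrdering α)
    (u v : α) (r : List α) (a : α) : Prop :=
  u ⋖ a ∧ a ≤ v ∧ ∀ b, u ⋖ b → b ≤ v → b ≠ a → S.lt u r a b

/-- `IsGRAO S u v r`: the restriction of the chain-atom ordering `S` to the rooted
interval `[u,v]_r` is a generalized recursive atom ordering (GRAO) of `[u,v]`.
Either `[u,v]` has length 1, or: (i)(a) for each atom `a` of `[u,v]_r` the restriction
to `[a,v]_{r·a}` is a GRAO; (i)(b) for each atom `a` and each `a ⋖ x ⋖ w ≤ v`, either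
the first atom of `[a,w]_{r·a}` lies above some atom of `[u,v]_r` earlier than `a`, or
no atom of `[a,w]_{r·a}` does; (ii) if atoms `ai, aj` of `[u,v]_r` with `ai` earlier
than `aj` lie below a common `y ≤ v`, then some `z` with `aj ⋖ z ≤ y` lies above an
atom of `[u,v]_r` earlier than `aj`. -/
inductive IsGRAO {α : Type*} [PartialOrder α] (S : ChainAtomOrdering α) :
    α → α → List α → Prop
  | base (u v : α) (r : List α) (h : u ⋖ v) : IsGRAO S u v r
  | step (u v : α) (r : List α)
      (ia : ∀ a, u ⋖ a → a ≤ v → IsGRAO S a v (r ++ [a]))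
      (ib : ∀ a x w, u ⋖ a → a ≤ v → a ⋖ x → x ⋖ w → w ≤ v →
        (∃ b, S.IsFirstAtom a w (r ++ [a]) b ∧
          ∃ a', u ⋖ a' ∧ a' ≤ v ∧ S.lt u r a' a ∧ a' < b) ∨
        (∀ b a', a ⋖ b → b ≤ w → u ⋖ a' → a' ≤ v → S.lt u r a' a → ¬ a' < b))
      (ii : ∀ ai aj y, u ⋖ ai → ai ≤ v → u ⋖ aj → aj ≤ v → S.lt u r ai aj →
        ai < y → aj < y → y ≤ v →
        ∃ ak z, u ⋖ ak ∧ ak ≤ v ∧ S.lt u r ak aj ∧ aj ⋖ z ∧ z ≤ y ∧ ak < z) :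
      IsGRAO S u v r

/-- `IsRAO S u v r`: the restriction of the chain-atom ordering `S` to the rooted
interval `[u,v]_r` is a recursive atom ordering (RAO) of `[u,v]`.  It differs from a
GRAO only in condition (i)(b): for each atom `a` of `[u,v]_r`, every atom of
`[a,v]_{r·a}` lying above some atom of `[u,v]_r` earlier than `a` must precede every
atom of `[a,v]_{r·a}` lying above no such atom. -/
inductive IsRAO {α : Type*} [PartialOrder α] (S : ChainAtomOrdering α) :
    α → α → List α → Prop
  | base (u v : α) (r : List α) (h : u ⋖ v) : IsRAO S u v r
  | step (u v : α) (r : List α)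
      (ia : ∀ a, u ⋖ a → a ≤ v → IsRAO S a v (r ++ [a]))
      (ib : ∀ a b c, u ⋖ a → a ≤ v → a ⋖ b → b ≤ v → a ⋖ c → c ≤ v →
        (∃ a', u ⋖ a' ∧ a' ≤ v ∧ S.lt u r a' a ∧ a' < b) →
        (∀ a', u ⋖ a' → a' ≤ v → S.lt u r a' a → ¬ a' < c) →
        S.lt a (r ++ [a]) b c)
      (ii : ∀ ai aj y, u ⋖ ai → ai ≤ v → u ⋖ aj → aj ≤ v → S.lt u r ai aj →
        ai < y → aj < y → y ≤ v →
        ∃ ak z, u ⋖ ak ∧ ak ≤ v ∧ S.lt u r ak aj ∧ aj ⋖ z ∧ z ≤ y ∧ ak < z) :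
      IsRAO S u v r

/-- `MemF S uminus rminus u v a`: the atom `a` of the rooted interval `[u,v]_{rminus·u}`
belongs to the set `F_r(u,v)`: `a` lies above some atom `u'` of `[uminus,v]_{rminus}`
that comes earlier than `u` in the `S`-order on the atoms of `[uminus,⊤]_{rminus}`. -/
def MemF {α : Type*} [PartialOrder α] (S : ChainAtomOrdering α)
    (uminus : α) (rminus : List α) (u v a : α) : Prop :=
  u ⋖ a ∧ a ≤ v ∧ ∃ u', uminus ⋖ u' ∧ u' ≤ v ∧ S.lt uminus rminus u' u ∧ u' < a

/-- `MemG S uminus rminus u v a`: the atom `a` of `[u,v]_{rminus·u}` belongs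
to `G_r(u,v)`, the complement of `F_r(u,v)` among the atoms of `[u,v]`. -/
def MemG {α : Type*} [PartialOrder α] (S : ChainAtomOrdering α)
    (uminus : α) (rminus : List α) (u v a : α) : Prop :=
  u ⋖ a ∧ a ≤ v ∧ ¬ MemF S uminus rminus u v a

/-- `IsReorderingOn v Ω Γ`: the chain-atom ordering `Γ` (restricted to the interval
`[⊥,v]`) is the result of applying the atom reordering process to the restriction of
`Ω` to `[⊥,v]`.  This is the declarative characterization of the bottom-to-top
reordering procedure (for any linear extension): the order on the atoms of `[⊥,v]`
is unchanged, and for each `u ≠ ⊥` with root `rminus·u`, the elements of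
`F_r(u,v)` (computed with respect to the already-reordered orders strictly below `u`,
i.e. with respect to `Γ`) precede those of `G_r(u,v)`, and the relative `Ω`-order
within `F_r(u,v)` and within `G_r(u,v)` is preserved. -/
def IsReorderingOn {α : Type*} [PartialOrder α] [OrderBot α] (v : α)
    (Om Ga : ChainAtomOrdering α) : Prop :=
  (∀ a b, (⊥ : α) ⋖ a → a ≤ v → (⊥ : α) ⋖ b → b ≤ v →
    (Ga.lt ⊥ [⊥] a b ↔ Om.lt ⊥ [⊥] a b)) ∧
  (∀ (rminus : List α) (uminus u : α), SatChain (⊥ : α) uminus rminus → uminus ⋖ u →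
    ∀ a b, u ⋖ a → a ≤ v → u ⋖ b → b ≤ v →
      (Ga.lt u (rminus ++ [u]) a b ↔
        (MemF Ga uminus rminus u v a ∧ ¬ MemF Ga uminus rminus u v b) ∨
        ((MemF Ga uminus rminus u v a ↔ MemF Ga uminus rminus u v b) ∧
          Om.lt u (rminus ++ [u]) a b)))

/-- `Γ` is the result of applying the atom reordering process to `Ω` on all of `α`. -/
def IsReordering {α : Type*} [PartialOrder α] [BoundedOrder α]
    (Om Ga : ChainAtomOrdering α) : Prop :=
  IsReorderingOn (⊤ : α) Om Ga


section GraoReorderProof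

open Classical

set_option linter.unusedSectionVars false

variable {α : Type*} [PartialOrder α] [BoundedOrder α] [Fintype α]

/-- existence of a minimum for the order `T.lt u r` on any finite set of atoms -/
lemma cao_finset_min (T : ChainAtomOrdering α) (u : α) (r : List α) :
    ∀ s : Finset α, (∀ c ∈ s, u ⋖ c) → s.Nonempty →
      ∃ b ∈ s, ∀ c ∈ s, c ≠ b → T.lt u r b c := by
  intro s
  induction s using Finset.induction_on with
  | empty => intro _ hne; exact absurd hne (by simp)
  | @insert a s ha ih =>
    intro hcov _
    by_cases hs : s.Nonempty
    · obtain ⟨b, hb, hbmin⟩ := ih (fun c hc => hcov c (Finset.mem_insert_of_mem hc)) hs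
      have hac : u ⋖ a := hcov a (Finset.mem_insert_self a s)
      have hbc : u ⋖ b := hcov b (Finset.mem_insert_of_mem hb)
      have hab : a ≠ b := fun h => ha (h ▸ hb)
      rcases T.total u r a b hac hbc hab with h1 | h1
      · refine ⟨a, Finset.mem_insert_self a s, ?_⟩
        intro c hc hne
        rcases Finset.mem_insert.mp hc with rfl | hc
        · exact absurd rfl hne
        · by_cases hcb : c = b
          · exact hcb ▸ h1
          · exact T.trans u r a b c h1 (hbmin c hc hcb)
      · refine ⟨b, Finset.mem_insert_of_mem hb, ?_⟩
        intro c hc hne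
        rcases Finset.mem_insert.mp hc with rfl | hc
        · exact h1
        · exact hbmin c hc hne
    · have : s = ∅ := Finset.not_nonempty_iff_eq_empty.mp hs
      subst this
      refine ⟨a, Finset.mem_insert_self a ∅, ?_⟩
      intro c hc hne
      simp only [Finset.mem_insert, Finset.notMem_empty, or_false] at hc
      exact absurd hc hne

lemma cao_exists_min (T : ChainAtomOrdering α) (u : α) (r : List α)
    (p : α → Prop) (hp : ∀ c, p c → u ⋖ c) (hne : ∃ c, p c) :
    ∃ b, p b ∧ ∀ c, p c → c ≠ b → T.lt u r b c := by
  classical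
  obtain ⟨b, hb, hmin⟩ := cao_finset_min T u r (Finset.univ.filter p)
    (fun c hc => hp c (Finset.mem_filter.mp hc).2)
    (hne.imp (fun c hc => Finset.mem_filter.mpr ⟨Finset.mem_univ c, hc⟩))
  exact ⟨b, (Finset.mem_filter.mp hb).2,
    fun c hc hcb => hmin c (Finset.mem_filter.mpr ⟨Finset.mem_univ c, hc⟩) hcb⟩

lemma cov_eq_top {u a : α} (h1 : u ⋖ (⊤ : α)) (h2 : u ⋖ a) : a = ⊤ := by
  by_contra hne
  exact h1.2 h2.lt (lt_top_iff_ne_top.mpr hne)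

lemma grao_of_top (T : ChainAtomOrdering α) (r : List α) : IsGRAO T ⊤ ⊤ r := by
  refine IsGRAO.step ⊤ ⊤ r ?_ ?_ ?_
  · intro a ha _; exact absurd ha.lt not_top_lt
  · intro a x w ha _ _ _ _; exact absurd ha.lt not_top_lt
  · intro ai aj y hai _ _ _ _ _ _ _; exact absurd hai.lt not_top_lt

lemma grao_ia (T : ChainAtomOrdering α) {u : α} {r : List α}
    (hG : IsGRAO T u ⊤ r) {a : α} (ha : u ⋖ a) : IsGRAO T a ⊤ (r ++ [a]) := by
  cases hG with
  | base _ _ _ htop =>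
    have : a = ⊤ := cov_eq_top htop ha
    subst this
    exact grao_of_top T _
  | step _ _ _ ia ib ii => exact ia a ha le_top

lemma grao_ii (T : ChainAtomOrdering α) {u : α} {r : List α}
    (hG : IsGRAO T u ⊤ r) :
    ∀ ai aj y, u ⋖ ai → u ⋖ aj → T.lt u r ai aj → ai < y → aj < y →
      ∃ ak z, u ⋖ ak ∧ T.lt u r ak aj ∧ aj ⋖ z ∧ z ≤ y ∧ ak < z := by
  intro ai aj y hai haj hlt hiy hjy
  cases hG with
  | base _ _ _ htop =>
    exact absurd (lt_of_lt_of_le hjy le_top) (htop.2 haj.lt)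
  | step _ _ _ ia ib ii =>
    obtain ⟨ak, z, h1, _, h3, h4, h5, h6⟩ :=
      ii ai aj y hai le_top haj le_top hlt hiy hjy le_top
    exact ⟨ak, z, h1, h3, h4, h5, h6⟩

lemma grao_ib (T : ChainAtomOrdering α) {um : α} {rm : List α}
    (hG : IsGRAO T um ⊤ rm) :
    ∀ u x w, um ⋖ u → u ⋖ x → x ⋖ w →
      (∃ b, T.IsFirstAtom u w (rm ++ [u]) b ∧
        ∃ a', um ⋖ a' ∧ T.lt um rm a' u ∧ a' < b) ∨
      (∀ b a', u ⋖ b → b ≤ w → um ⋖ a' → T.lt um rm a' u → ¬ a' < b) := by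
  intro u x w hu hx hw
  cases hG with
  | base _ _ _ htop =>
    have hx_top : x < ⊤ := lt_of_lt_of_le hw.lt le_top
    exact absurd (lt_trans hx.lt hx_top) (htop.2 hu.lt)
  | step _ _ _ ia ib ii =>
    rcases ib u x w hu le_top hx hw le_top with ⟨b, h1, a', h2, _, h4, h5⟩ | h
    · exact Or.inl ⟨b, h1, a', h2, h4, h5⟩
    · exact Or.inr fun b a' hb hbw ha' hlt => h b a' hb hbw ha' le_top hlt

lemma satchain_bot : SatChain (⊥ : α) ⊥ [⊥] :=
  ⟨List.isChain_singleton _, rfl, rfl⟩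

lemma satchain_snoc {um u : α} {rm : List α}
    (hs : SatChain (⊥ : α) um rm) (hc : um ⋖ u) : SatChain (⊥ : α) u (rm ++ [u]) := by
  obtain ⟨h1, h2, h3⟩ := hs
  have hne : rm ≠ [] := by rintro rfl; simp at h2
  refine ⟨?_, ?_, ?_⟩
  · simp only [List.Chain', List.isChain_append]
    refine ⟨h1, List.isChain_singleton _, ?_⟩
    intro x hx y hy
    simp only [List.head?_cons, Option.mem_some_iff] at hy
    have hx' : x = um := by
      rw [h3] at hx
      exact (Option.mem_some_iff.mp hx).symm
    subst hy; subst hx'; exact hc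
  · rw [List.head?_append_of_ne_nil _ hne]; exact h2
  · simp [List.getLast?_concat]

lemma satchain_cases {u : α} {r : List α} (hs : SatChain (⊥ : α) u r) :
    (u = ⊥ ∧ r = [⊥]) ∨
      ∃ rm um, SatChain (⊥ : α) um rm ∧ um ⋖ u ∧ r = rm ++ [u] := by
  obtain ⟨hch, hh, hl⟩ := hs
  rcases List.eq_nil_or_concat r with rfl | ⟨q, a, rfl⟩
  · simp at hh
  · rw [List.concat_eq_append] at hch hh hl ⊢
    have ha : a = u := by
      rw [List.getLast?_concat] at hl
      exact Option.some.inj hl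
    subst ha
    cases q with
    | nil =>
      left
      simp only [List.nil_append, List.head?_cons, Option.some.injEq] at hh
      subst hh
      exact ⟨rfl, rfl⟩
    | cons b q' =>
      right
      have hq_ne : (b :: q') ≠ ([] : List α) := by simp
      simp only [List.Chain', List.isChain_append] at hch
      obtain ⟨hc1, _, hc3⟩ := hch
      have hlast : (b :: q').getLast? = some ((b :: q').getLast hq_ne) :=
        List.getLast?_eq_getLast hq_ne
      refine ⟨b :: q', (b :: q').getLast hq_ne, ⟨hc1, ?_, hlast⟩, ?_, rfl⟩
      · rw [List.head?_append_of_ne_nil _ hq_ne] at hh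
        exact hh
      · exact hc3 _ (by rw [hlast]; rfl) a rfl


/-- `x` lies above some atom of `[um,⊤]` that is `T`-earlier than `u`. -/
def EltS (T : ChainAtomOrdering α) (um : α) (rm : List α) (u x : α) : Prop :=
  ∃ b, um ⋖ b ∧ T.lt um rm b u ∧ b < x

variable (S S' : ChainAtomOrdering α)

lemma grao_of_root (h : IsGRAO S ⊥ ⊤ [⊥]) :
    ∀ (n : ℕ) (r : List α) (u : α), r.length ≤ n → SatChain (⊥ : α) u r →
      IsGRAO S u ⊤ r := by
  intro n
  induction n with
  | zero =>
    intro r u hlen hs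
    obtain ⟨_, hh, _⟩ := hs
    rw [List.length_eq_zero_iff.mp (Nat.le_zero.mp hlen)] at hh
    simp at hh
  | succ n ih =>
    intro r u hlen hs
    rcases satchain_cases hs with ⟨rfl, rfl⟩ | ⟨rm, um, hsm, hc, rfl⟩
    · exact h
    · have hlen' : rm.length ≤ n := by
        simp only [List.length_append, List.length_cons, List.length_nil] at hlen
        omega
      exact grao_ia S (ih rm um hlen' hsm) hc

lemma keyF {um u : α} {rm : List α}
    (hGm : IsGRAO S um ⊤ rm) (hGu : IsGRAO S u ⊤ (rm ++ [u])) (hc : um ⋖ u)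
    {a y : α} (ha : u ⋖ a) (hay : a < y)
    (hnFa : ¬ EltS S um rm u a)
    (hex : ∃ c, u ⋖ c ∧ c < y ∧ EltS S um rm u c) :
    ∃ b, u ⋖ b ∧ b < y ∧ S.lt u (rm ++ [u]) b a := by
  classical
  obtain ⟨zs, ⟨hzc, hzy, hzF⟩, hmin⟩ := cao_exists_min S u (rm ++ [u])
    (fun c => u ⋖ c ∧ c < y ∧ EltS S um rm u c) (fun c hc => hc.1) hex
  have hzsa : zs ≠ a := fun e => hnFa (e ▸ hzF)
  rcases S.total u (rm ++ [u]) zs a hzc ha hzsa with hS | hS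
  · exact ⟨zs, hzc, hzy, hS⟩
  · exfalso
    obtain ⟨ak, w, hakc, hakS, hwc, hwy, hakw⟩ := grao_ii S hGu a zs y ha hzc hS hay hzy
    rcases grao_ib S hGm u zs w hc hzc hwc with
      ⟨cfa, ⟨hcc, hcw, hcmin⟩, a2, ha2c, ha2S, ha2lt⟩ | hno
    · have hcfy : cfa < y := by
        rcases lt_or_eq_of_le (le_trans hcw hwy) with hlt | heq
        · exact hlt
        · exact absurd hzy ((heq ▸ hcc).2 hzc.lt)
      have hcfP : u ⋖ cfa ∧ cfa < y ∧ EltS S um rm u cfa :=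
        ⟨hcc, hcfy, ⟨a2, ha2c, ha2S, ha2lt⟩⟩
      have hceq : cfa = zs := by
        by_contra hne2
        have h1 := hmin cfa hcfP hne2
        have h2 := hcmin zs hzc hwc.le (Ne.symm hne2)
        exact S.irrefl _ _ _ (S.trans _ _ _ _ _ h1 h2)
      subst hceq
      have hakne : ak ≠ cfa := fun e => S.irrefl _ _ _ (e ▸ hakS)
      exact S.irrefl _ _ _ (S.trans _ _ _ _ _ hakS (hcmin ak hakc hakw.le hakne))
    · obtain ⟨w1, hw1c, hw1S, hw1lt⟩ := hzF
      exact hno zs w1 hzc hwc.le hw1c hw1S hw1lt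

lemma keyG {um u : α} {rm : List α}
    (hGm : IsGRAO S um ⊤ rm) (hc : um ⋖ u)
    {a z ak : α} (ha : u ⋖ a) (hz : a ⋖ z)
    (hFa : EltS S um rm u a) (hakc : u ⋖ ak) (hakz : ak < z)
    (hakS : S.lt u (rm ++ [u]) ak a) :
    ∃ c, u ⋖ c ∧ c < z ∧ S.lt u (rm ++ [u]) c a ∧ EltS S um rm u c := by
  rcases grao_ib S hGm u a z hc ha hz with
    ⟨cfa, ⟨hcc, hcz, hcmin⟩, a2, ha2c, ha2S, ha2lt⟩ | hno
  · have hcne : cfa ≠ a := by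
      rintro rfl
      have h1 := hcmin ak hakc hakz.le (fun e => S.irrefl _ _ _ (e ▸ hakS))
      exact S.irrefl _ _ _ (S.trans _ _ _ _ _ hakS h1)
    have hclt : cfa < z := lt_of_le_of_ne hcz (fun e => (e ▸ hcc).2 ha.lt hz.lt)
    exact ⟨cfa, hcc, hclt, hcmin a ha hz.le (Ne.symm hcne), ⟨a2, ha2c, ha2S, ha2lt⟩⟩
  · obtain ⟨w1, hw1c, hw1S, hw1lt⟩ := hFa
    exact absurd hw1lt (hno a w1 ha hz.le hw1c hw1S)

lemma grao_AB (h : IsGRAO S ⊥ ⊤ [⊥]) (hre : IsReordering S S') :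
    ∀ (n : ℕ) (r : List α) (u : α), r.length ≤ n → SatChain (⊥ : α) u r →
      ((∀ ai aj y, u ⋖ ai → u ⋖ aj → S'.lt u r ai aj → ai < y → aj < y →
          ∃ ak z, u ⋖ ak ∧ S'.lt u r ak aj ∧ aj ⋖ z ∧ z ≤ y ∧ ak < z) ∧
        (∀ a t, u ⋖ a → a < t →
          ((∃ b, u ⋖ b ∧ S'.lt u r b a ∧ b < t) ↔
            (∃ b, u ⋖ b ∧ S.lt u r b a ∧ b < t)))) := by
  have hre' : IsReorderingOn (⊤ : α) S S' := hre
  intro n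
  induction n with
  | zero =>
    intro r u hlen hs
    obtain ⟨_, hh, _⟩ := hs
    rw [List.length_eq_zero_iff.mp (Nat.le_zero.mp hlen)] at hh
    simp at hh
  | succ n ih =>
    intro r u hlen hs
    rcases satchain_cases hs with ⟨rfl, rfl⟩ | ⟨rm, um, hsm, hc, rfl⟩
    · constructor
      · intro ai aj y hai haj hlt hiy hjy
        have hS := (hre'.1 ai aj hai le_top haj le_top).mp hlt
        obtain ⟨ak, z, h1, h3, h4, h5, h6⟩ := grao_ii S h ai aj y hai haj hS hiy hjy
        exact ⟨ak, z, h1, (hre'.1 ak aj h1 le_top haj le_top).mpr h3, h4, h5, h6⟩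
      · intro a t hac hat
        constructor <;> rintro ⟨b, h1, h2, h3⟩
        · exact ⟨b, h1, (hre'.1 b a h1 le_top hac le_top).mp h2, h3⟩
        · exact ⟨b, h1, (hre'.1 b a h1 le_top hac le_top).mpr h2, h3⟩
    · have hlen' : rm.length ≤ n := by
        simp only [List.length_append, List.length_cons, List.length_nil] at hlen
        omega
      have hGm : IsGRAO S um ⊤ rm := grao_of_root S h rm.length rm um le_rfl hsm
      have hGu : IsGRAO S u ⊤ (rm ++ [u]) := grao_ia S hGm hc
      obtain ⟨Am, Bm⟩ := ih rm um hlen' hsm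
      have char : ∀ a b, u ⋖ a → u ⋖ b →
          (S'.lt u (rm ++ [u]) a b ↔
            (MemF S' um rm u ⊤ a ∧ ¬ MemF S' um rm u ⊤ b) ∨
            ((MemF S' um rm u ⊤ a ↔ MemF S' um rm u ⊤ b) ∧ S.lt u (rm ++ [u]) a b)) :=
        fun a b ha hb => hre'.2 rm um u hsm hc a b ha le_top hb le_top
      have memf : ∀ x, u ⋖ x → (MemF S' um rm u ⊤ x ↔ EltS S' um rm u x) := by
        intro x hx
        constructor
        · rintro ⟨-, -, u', h1, -, h3, h4⟩; exact ⟨u', h1, h3, h4⟩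
        · rintro ⟨u', h1, h3, h4⟩; exact ⟨hx, le_top, u', h1, le_top, h3, h4⟩
      have memfS : ∀ x, u ⋖ x → (MemF S' um rm u ⊤ x ↔ EltS S um rm u x) :=
        fun x hx => (memf x hx).trans (Bm u x hc hx.lt)
      constructor
      · -- condition (ii) for S'
        intro ai aj y hai haj hlt hiy hjy
        rcases (char ai aj hai haj).mp hlt with ⟨hFi, hFj⟩ | ⟨hiff, hS⟩
        · -- ai in F, aj not in F
          have hFj' : ¬ EltS S um rm u aj := fun hx => hFj ((memfS aj haj).mpr hx)
          obtain ⟨u', hu'c, hu'lt, hu'ai⟩ := (memf ai hai).mp hFi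
          obtain ⟨u'', z1, hu''c, hu''lt, hz1c, hz1y, hu''z1⟩ :=
            Am u' u y hu'c hc hu'lt (lt_trans hu'ai hiy) (lt_trans haj.lt hjy)
          have hz1lty : z1 < y := lt_of_le_of_ne hz1y (fun e => (e ▸ hz1c).2 haj.lt hjy)
          have hz1F : EltS S um rm u z1 :=
            (memfS z1 hz1c).mp ((memf z1 hz1c).mpr ⟨u'', hu''c, hu''lt, hu''z1⟩)
          obtain ⟨zs, hzs_c, hzs_y, hzs_S⟩ :=
            keyF S hGm hGu hc haj hjy hFj' ⟨z1, hz1c, hz1lty, hz1F⟩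
          obtain ⟨ak, z, hakc, hakS, hzc, hzy, hakz⟩ :=
            grao_ii S hGu zs aj y hzs_c haj hzs_S hzs_y hjy
          have hS'ak : S'.lt u (rm ++ [u]) ak aj := by
            refine (char ak aj hakc haj).mpr ?_
            by_cases hm : MemF S' um rm u ⊤ ak
            · exact Or.inl ⟨hm, hFj⟩
            · exact Or.inr ⟨iff_of_false hm hFj, hakS⟩
          exact ⟨ak, z, hakc, hS'ak, hzc, hzy, hakz⟩
        · by_cases hFj : MemF S' um rm u ⊤ aj
          · -- both in F
            obtain ⟨ak, z, hakc, hakS, hzc, hzy, hakz⟩ :=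
              grao_ii S hGu ai aj y hai haj hS hiy hjy
            have hFaS : EltS S um rm u aj := (memfS aj haj).mp hFj
            obtain ⟨cc, hccc, hcclt, hccS, hccF⟩ := keyG S hGm hc haj hzc hFaS hakc hakz hakS
            have hlt' : S'.lt u (rm ++ [u]) cc aj :=
              (char cc aj hccc haj).mpr
                (Or.inr ⟨iff_of_true ((memfS cc hccc).mpr hccF) hFj, hccS⟩)
            exact ⟨cc, z, hccc, hlt', hzc, hzy, hcclt⟩
          · -- both outside F
            obtain ⟨ak, z, hakc, hakS, hzc, hzy, hakz⟩ :=
              grao_ii S hGu ai aj y hai haj hS hiy hjy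
            have hlt' : S'.lt u (rm ++ [u]) ak aj := by
              refine (char ak aj hakc haj).mpr ?_
              by_cases hm : MemF S' um rm u ⊤ ak
              · exact Or.inl ⟨hm, hFj⟩
              · exact Or.inr ⟨iff_of_false hm hFj, hakS⟩
            exact ⟨ak, z, hakc, hlt', hzc, hzy, hakz⟩
      · -- E-sets agree
        intro a t hac hat
        constructor
        · rintro ⟨a', ha'c, ha'lt, ha't⟩
          by_cases hSlt : S.lt u (rm ++ [u]) a' a
          · exact ⟨a', ha'c, hSlt, ha't⟩
          · rcases (char a' a ha'c hac).mp ha'lt with ⟨hFa', hFa⟩ | ⟨-, hS2⟩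
            · have hFa'S : EltS S um rm u a' := (memfS a' ha'c).mp hFa'
              have hnFaS : ¬ EltS S um rm u a := fun hx => hFa ((memfS a hac).mpr hx)
              obtain ⟨zs, h1, h2, h3⟩ :=
                keyF S hGm hGu hc hac hat hnFaS ⟨a', ha'c, ha't, hFa'S⟩
              exact ⟨zs, h1, h3, h2⟩
            · exact absurd hS2 hSlt
        · rintro ⟨a'', hc2, hS2, h2t⟩
          by_cases hlt' : S'.lt u (rm ++ [u]) a'' a
          · exact ⟨a'', hc2, hlt', h2t⟩
          · have hne : a'' ≠ a := fun e => S.irrefl _ _ _ (e ▸ hS2)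
            have hlt2 : S'.lt u (rm ++ [u]) a a'' :=
              (S'.total u (rm ++ [u]) a a'' hac hc2 (Ne.symm hne)).resolve_right hlt'
            rcases (char a a'' hac hc2).mp hlt2 with ⟨hFa, hFa''⟩ | ⟨-, hS3⟩
            · obtain ⟨ak, z, hakc, hakS, hzc, hzt, hakz⟩ :=
                grao_ii S hGu a'' a t hc2 hac hS2 h2t hat
              have hFaS : EltS S um rm u a := (memfS a hac).mp hFa
              obtain ⟨cc, hccc, hcclt, hccS, hccF⟩ := keyG S hGm hc hac hzc hFaS hakc hakz hakS
              have hlt3 : S'.lt u (rm ++ [u]) cc a :=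
                (char cc a hccc hac).mpr
                  (Or.inr ⟨iff_of_true ((memfS cc hccc).mpr hccF) hFa, hccS⟩)
              exact ⟨cc, hccc, hlt3, lt_of_lt_of_le hcclt hzt⟩
            · exact absurd (S.trans _ _ _ _ _ hS3 hS2) (S.irrefl _ _ _)

lemma grao_main (h : IsGRAO S ⊥ ⊤ [⊥]) (hre : IsReordering S S') :
    ∀ (n : ℕ) (u : α) (r : List α),
      (Finset.univ.filter (fun x => u < x)).card ≤ n → SatChain (⊥ : α) u r →
      IsGRAO S' u ⊤ r := by
  have hre' : IsReorderingOn (⊤ : α) S S' := hre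
  intro n
  induction n with
  | zero =>
    intro u r hcard hs
    have hno : ∀ a : α, ¬ u ⋖ a := by
      intro a ha
      have hmem : a ∈ Finset.univ.filter (fun x => u < x) :=
        Finset.mem_filter.mpr ⟨Finset.mem_univ a, ha.lt⟩
      have := Finset.card_pos.mpr ⟨a, hmem⟩
      omega
    refine IsGRAO.step u ⊤ r ?_ ?_ ?_
    · intro a ha _; exact absurd ha (hno a)
    · intro a x w ha _ _ _ _; exact absurd ha (hno a)
    · intro ai aj y hai _ _ _ _ _ _ _; exact absurd hai (hno ai)
  | succ n ih =>
    intro u r hcard hs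
    by_cases htop : u ⋖ ⊤
    · exact IsGRAO.base u ⊤ r htop
    · refine IsGRAO.step u ⊤ r ?_ ?_ ?_
      · intro a ha _
        refine ih a (r ++ [a]) ?_ (satchain_snoc hs ha)
        have hsub : Finset.univ.filter (fun x => a < x) ⊂
            Finset.univ.filter (fun x => u < x) := by
          refine ⟨fun x hx => ?_, fun hsup => ?_⟩
          · simp only [Finset.mem_filter, Finset.mem_univ, true_and] at hx ⊢
            exact lt_trans ha.lt hx
          · have hmem : a ∈ Finset.univ.filter (fun x => u < x) :=
              Finset.mem_filter.mpr ⟨Finset.mem_univ a, ha.lt⟩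
            have := Finset.mem_filter.mp (hsup hmem)
            exact lt_irrefl a this.2
        have := Finset.card_lt_card hsub
        omega
      · intro a x w ha _ hax hxw _
        by_cases h2 : ∀ b a', a ⋖ b → b ≤ w → u ⋖ a' → a' ≤ ⊤ → S'.lt u r a' a → ¬ a' < b
        · exact Or.inr h2
        · left
          push_neg at h2
          obtain ⟨b0, a0, hb0c, hb0w, ha0c, -, ha0lt, ha0b0⟩ := h2
          obtain ⟨b, ⟨hbc, hbw⟩, hbmin⟩ := cao_exists_min S' a (r ++ [a])
            (fun c => a ⋖ c ∧ c ≤ w) (fun c hc => hc.1) ⟨x, hax, hxw.le⟩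
          have char : ∀ c d, a ⋖ c → a ⋖ d →
              (S'.lt a (r ++ [a]) c d ↔
                (MemF S' u r a ⊤ c ∧ ¬ MemF S' u r a ⊤ d) ∨
                ((MemF S' u r a ⊤ c ↔ MemF S' u r a ⊤ d) ∧ S.lt a (r ++ [a]) c d)) :=
            fun c d hcc hdc => hre'.2 r u a hs ha c d hcc le_top hdc le_top
          have hb0F : MemF S' u r a ⊤ b0 := ⟨hb0c, le_top, a0, ha0c, le_top, ha0lt, ha0b0⟩
          have hbF : MemF S' u r a ⊤ b := by
            by_cases hbb : b = b0
            · exact hbb ▸ hb0F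
            · have hlt := hbmin b0 ⟨hb0c, hb0w⟩ (fun e => hbb e.symm)
              rcases (char b b0 hbc hb0c).mp hlt with ⟨hF, -⟩ | ⟨hiff, -⟩
              · exact hF
              · exact hiff.mpr hb0F
          obtain ⟨-, -, a', h1', h2', h3', h4'⟩ := hbF
          exact ⟨b, ⟨hbc, hbw, fun c hc1 hc2 hcn => hbmin c ⟨hc1, hc2⟩ hcn⟩,
            a', h1', h2', h3', h4'⟩
      · intro ai aj y hai _ haj _ hlt hiy hjy _
        obtain ⟨ak, z, h1, h2, h3, h4, h5⟩ :=
          (grao_AB S S' h hre r.length r u le_rfl hs).1 ai aj y hai haj hlt hiy hjy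
        exact ⟨ak, z, h1, le_top, h2, h3, h4, h5⟩

end GraoReorderProof

/-- Applying the atom reordering process (for any linear extension of the poset; the
result is characterized by `IsReordering` independently of the chosen extension) to a
generalized recursive atom ordering of a finite bounded poset yields a generalized
recursive atom ordering. -/
theorem stmt_10 {α : Type*} [PartialOrder α] [BoundedOrder α] [Fintype α]
    (S : ChainAtomOrdering α) (h : IsGRAO S ⊥ ⊤ [⊥])
    (S' : ChainAtomOrdering α) (hre : IsReordering S S') :
    IsGRAO S' ⊥ ⊤ [⊥] := by
  classical
  exact grao_main S S' h hre (Finset.univ.filter (fun x => (⊥ : α) < x)).card ⊥ [⊥]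
    le_rfl satchain_bot
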